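/- Let η be a nonzero real number and q = e^{η} (the massive regime). Then for 0 ≤ n ≤ ℓ the bra ⟨ℓ,n|| is the Hermitian conjugate of the ket ||ℓ,n⟩ up to its positive norm: for every w ∈ (ℂ²)^{⊗ℓ}, ⟨ℓ,n||(w) = ⟨||ℓ,n⟩, w⟩_H / ⟨||ℓ,n⟩, ||ℓ,n⟩⟩_H; equivalently, the Hermitian adjoint functional ⟨||ℓ,n⟩, ·⟩_H equals [ℓ¦n]_q q^{−n(ℓ−n)} · ⟨ℓ,n||. -/

import Mathlib

open Matrix Complex Finset Filter

noncomputable section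

/-- q-integer `[n]_q = (q^n - q^{-n})/(q - q⁻¹)`. -/
def qint (q : ℂ) (n : ℕ) : ℂ := (q ^ n - q⁻¹ ^ n) / (q - q⁻¹)

/-- q-factorial `[n]_q!`. -/
def qfact (q : ℂ) (n : ℕ) : ℂ := ∏ k ∈ Finset.range n, qint q (k + 1)

/-- q-binomial coefficient `[m ¦ n]_q`. -/
def qbinom (q : ℂ) (m n : ℕ) : ℂ := qfact q m / (qfact q (m - n) * qfact q n)

/-- The set of positions where the configuration `c` equals `1`. -/
def oneSet {m : ℕ} (c : Fin m → Fin 2) : Finset (Fin m) :=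
  Finset.univ.filter fun i => c i = 1

/-- The exponent `Σ(S) − n m + n(n−1)/2` (positions counted `1,…,m`). -/
def expKet (m n : ℕ) (S : Finset (Fin m)) : ℤ :=
  (∑ i ∈ S, ((i : ℤ) + 1)) - (n : ℤ) * (m : ℤ) + ((n * (n - 1) / 2 : ℕ) : ℤ)

/-- Coefficients of the ket `||m, n⟩` in the standard basis. -/
def ketCoef (q : ℂ) (m n : ℕ) (c : Fin m → Fin 2) : ℂ :=
  if (oneSet c).card = n then q ^ expKet m n (oneSet c) else 0

/-- Coefficients of the bra `⟨m, n||` in the standard (bilinear) dual basis. -/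
def braCoef (q : ℂ) (m n : ℕ) (c : Fin m → Fin 2) : ℂ :=
  (qbinom q m n)⁻¹ * q ^ ((n : ℤ) * ((m : ℤ) - (n : ℤ))) * ketCoef q m n c

/-- Coefficients of the tilde bra `~⟨m, n||`. -/
def tbraCoef (q : ℂ) (m n : ℕ) (c : Fin m → Fin 2) : ℂ :=
  ((m.choose n : ℂ))⁻¹ *
    (if (oneSet c).card = n then q ^ (-(expKet m n (oneSet c))) else 0)

/-- Coefficients of the tilde ket `~||m, n⟩`. -/
def tketCoef (q : ℂ) (m n : ℕ) (c : Fin m → Fin 2) : ℂ :=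
  qbinom q m n * q ^ (-((n : ℤ) * ((m : ℤ) - (n : ℤ)))) * ((m.choose n : ℂ))⁻¹ *
    (if (oneSet c).card = n then q ^ (-(expKet m n (oneSet c))) else 0)


def gb (x : ℂ) : ℕ → ℕ → ℂ
  | _, 0 => 1
  | 0, _+1 => 0
  | m+1, n+1 => gb x m (n+1) + x^(m-n) * gb x m n

lemma gb_zero (x : ℂ) (m : ℕ) : gb x m 0 = 1 := by cases m <;> rfl

lemma gb_lt (x : ℂ) : ∀ m n, m < n → gb x m n = 0 := by
  intro m
  induction m with
  | zero => intro n h; match n, h with | n+1, _ => rfl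
  | succ m ih =>
    intro n h
    match n, h with
    | k+1, h =>
      show gb x m (k+1) + x^(m-k) * gb x m k = 0
      rw [ih _ (by omega), ih _ (by omega)]; ring

lemma gb_diag (x : ℂ) (m : ℕ) : gb x m m = 1 := by
  induction m with
  | zero => rfl
  | succ m ih =>
    show gb x m (m+1) + x^(m-m) * gb x m m = 1
    rw [gb_lt x m (m+1) (by omega), ih]; simp

section qlem
variable (q : ℂ) (hq : q ≠ 0) (hk : ∀ k : ℕ, 0 < k → q ^ k ≠ 1)
include hq hk

lemma hden : q - q⁻¹ ≠ 0 := by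
  have h2 : q^2 ≠ 1 := hk 2 (by norm_num)
  intro h
  apply h2
  have : q * (q - q⁻¹) = q^2 - 1 := by field_simp
  rw [h, mul_zero] at this
  linear_combination -this

lemma qint_ne_zero (j : ℕ) (hj : 0 < j) : qint q j ≠ 0 := by
  have hd := hden q hq hk
  have h2 : q^(2*j) ≠ 1 := hk _ (by omega)
  rw [qint, div_ne_zero_iff]
  refine ⟨?_, hd⟩
  intro h
  apply h2
  have : q^j * (q^j - q⁻¹^j) = q^(2*j) - 1 := by
    rw [inv_pow]; field_simp; ring
  rw [h, mul_zero] at this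
  linear_combination -this

lemma qint_key (a b : ℕ) : qint q a + q^(a+b) * qint q b = q^b * qint q (a+b) := by
  have hd := hden q hq hk
  simp only [qint, inv_pow, mul_div_assoc']
  rw [← add_div]
  congr 1
  field_simp
  ring

lemma qfact_ne_zero (k : ℕ) : qfact q k ≠ 0 := by
  rw [qfact]
  exact Finset.prod_ne_zero_iff.2 fun i _ => qint_ne_zero q hq hk (i+1) (by omega)

end qlem

lemma gb_succ (x : ℂ) (m n : ℕ) : gb x (m+1) (n+1) = gb x m (n+1) + x^(m-n) * gb x m n := rfl

lemma gb_qfact (q : ℂ) (hq : q ≠ 0) (hk : ∀ k : ℕ, 0 < k → q ^ k ≠ 1) :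
    ∀ m n, n ≤ m → gb (q^2) m n * (qfact q (m-n) * qfact q n) = qfact q m * q ^ (n*(m-n)) := by
  intro m
  induction m with
  | zero =>
    intro n hn
    interval_cases n
    simp [gb_zero, qfact]
  | succ m ih =>
    intro n hn
    match n with
    | 0 => simp [gb_zero, qfact]
    | k+1 =>
      rcases Nat.lt_or_ge k m with hkm | hkm
      · obtain ⟨a, rfl⟩ : ∃ a, m = k + 1 + a := ⟨m - k - 1, by omega⟩
        have e1 : k + 1 + a - k = a + 1 := by omega
        have e2 : k + 1 + a - (k+1) = a := by omega
        have e3 : k + 1 + a + 1 - (k + 1) = a + 1 := by omega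
        rw [gb_succ, e1, e3]
        have IH1 := ih (k+1) (by omega)
        have IH2 := ih k (by omega)
        rw [e2] at IH1
        rw [e1] at IH2
        have key := qint_key q hq hk (a+1) (k+1)
        have fs1 : qfact q (a+1) = qfact q a * qint q (a+1) := Finset.prod_range_succ _ _
        have fs2 : qfact q (k+1) = qfact q k * qint q (k+1) := Finset.prod_range_succ _ _
        have fs3 : qfact q (k+1+a+1) = qfact q (k+1+a) * qint q (k+1+a+1) := Finset.prod_range_succ _ _
        rw [fs2] at IH1
        rw [fs1] at IH2
        rw [fs1, fs2, fs3]
        have ekey : (a+1) + (k+1) = k+1+a+1 := by omega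
        rw [ekey] at key
        linear_combination qint q (a+1) * IH1 + (q^(2*(a+1)) * qint q (k+1)) * IH2 +
          (qfact q (k+1+a) * q^((k+1)*a)) * key
      · have hkm' : k = m := by omega
        subst hkm'
        rw [gb_succ, gb_lt _ _ _ (by omega), gb_diag]
        simp [qfact]

lemma sumF (x : ℂ) : ∀ m n, ∑ S ∈ (Finset.range m).powerset,
    (if S.card = n then x ^ (∑ i ∈ S, (i+1)) else 0) = gb x m n * x ^ (n*(n+1)/2) := by
  intro m
  induction m with
  | zero =>
    intro n
    match n with
    | 0 => simp [gb_zero]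
    | k+1 => simp [gb_lt x 0 (k+1) (by omega)]
  | succ m ih =>
    intro n
    rw [Finset.range_add_one, Finset.sum_powerset_insert (by simp)]
    have h2 : ∀ S ∈ (Finset.range m).powerset,
        (if (insert m S).card = n then x ^ (∑ i ∈ insert m S, (i+1)) else 0)
          = (if S.card + 1 = n then x^(m+1) * x ^ (∑ i ∈ S, (i+1)) else 0) := by
      intro S hS
      have hm : m ∉ S := fun h => by
        simp only [Finset.mem_powerset] at hS
        exact absurd (hS h) (by simp)
      rw [Finset.card_insert_of_notMem hm, Finset.sum_insert hm, pow_add]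
    rw [Finset.sum_congr rfl h2]
    match n with
    | 0 =>
      simp only [Nat.add_one_ne_zero, if_false, Finset.sum_const_zero, add_zero, ih 0]
      simp [gb_zero]
    | k+1 =>
      have h3 : ∀ S : Finset ℕ, (if S.card + 1 = k + 1 then x^(m+1) * x ^ (∑ i ∈ S, (i+1)) else 0)
          = x^(m+1) * (if S.card = k then x ^ (∑ i ∈ S, (i+1)) else 0) := by
        intro S
        by_cases h : S.card = k <;> simp [h]
      simp only [h3, ← Finset.mul_sum, ih, gb_succ]
      rcases Nat.lt_or_ge k (m+1) with hkm | hkm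
      · have hd : (k+1)*(k+2)/2 = k*(k+1)/2 + (k+1) := by
          have : (k+1)*(k+2) = k*(k+1) + (k+1)*2 := by ring
          rw [this, Nat.add_mul_div_right _ _ (by norm_num)]
        have hx : x^(m+1) * x^(k*(k+1)/2) = x^(m-k) * x^((k+1)*(k+2)/2) := by
          rw [← pow_add, ← pow_add, hd]
          have he : m + 1 + k*(k+1)/2 = m - k + (k*(k+1)/2 + (k+1)) := by
            generalize k*(k+1)/2 = c
            omega
          rw [he]
        have hd2 : (k+1)*((k+1)+1) = (k+1)*(k+2) := by ring
        rw [hd2]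
        linear_combination gb x m k * hx
      · rw [gb_lt x m k (by omega), gb_lt x m (k+1) (by omega)]
        ring


lemma cast_half (n : ℕ) : (2:ℤ) * ((n*(n-1)/2 : ℕ):ℤ) = (n:ℤ)*((n:ℤ)-1) := by
  rcases n with _ | j
  · simp
  · obtain ⟨c, hc⟩ := Nat.even_mul_succ_self j
    have h1 : (j+1)*((j+1)-1)/2 = c := by
      simp only [Nat.add_sub_cancel]
      rw [Nat.mul_comm, hc]; omega
    rw [h1]
    have hcz : ((j:ℤ))*((j:ℤ)+1) = (c:ℤ) + c := by exact_mod_cast congrArg (Nat.cast : ℕ → ℤ) hc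
    push_cast
    linear_combination -hcz

lemma norm_eq (q : ℂ) (hq : q ≠ 0) (hk : ∀ k : ℕ, 0 < k → q ^ k ≠ 1) (m n : ℕ) (hn : n ≤ m) :
    ∑ S : Finset (Fin m), (if S.card = n then q ^ (2 * expKet m n S) else 0)
      = qbinom q m n * q ^ (-((n:ℤ) * ((m:ℤ) - (n:ℤ)))) := by
  have hfa := qfact_ne_zero q hq hk (m-n)
  have hfb := qfact_ne_zero q hq hk n
  have step1 : ∀ S : Finset (Fin m),
      (if S.card = n then q ^ (2 * expKet m n S) else 0)
        = q ^ ((n:ℤ)*((n:ℤ)-1) - 2*(n:ℤ)*(m:ℤ)) *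
          (if S.card = n then ((q^2) ^ (∑ i ∈ S.image Fin.val, (i+1)) : ℂ) else 0) := by
    intro S
    by_cases h : S.card = n
    · simp only [h, if_true]
      have hsum : ((∑ i ∈ S.image Fin.val, (i+1) : ℕ) : ℤ) = ∑ i ∈ S, ((i : ℤ) + 1) := by
        rw [Finset.sum_image (fun i _ j _ h => Fin.val_injective h)]
        push_cast
        rfl
      have hE : 2 * expKet m n S = ((n:ℤ)*((n:ℤ)-1) - 2*(n:ℤ)*(m:ℤ))
          + 2 * ((∑ i ∈ S.image Fin.val, (i+1) : ℕ) : ℤ) := by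
        rw [expKet, hsum]
        linear_combination cast_half n
      rw [hE, zpow_add₀ hq]
      congr 1
      rw [show (2:ℤ) * ((∑ i ∈ S.image Fin.val, (i+1) : ℕ) : ℤ)
            = ((2 * ∑ i ∈ S.image Fin.val, (i+1) : ℕ) : ℤ) by push_cast; ring,
        zpow_natCast, pow_mul]
    · simp [h]
  simp only [step1]
  rw [← Finset.mul_sum]
  have step2 : ∑ S : Finset (Fin m), (if S.card = n then ((q^2) ^ (∑ i ∈ S.image Fin.val, (i+1)) : ℂ) else 0)
      = ∑ T ∈ (Finset.range m).powerset, (if T.card = n then (q^2) ^ (∑ i ∈ T, (i+1)) else 0) := by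
    apply Finset.sum_bij (fun (S : Finset (Fin m)) _ => S.image Fin.val)
    · intro S _
      simp only [Finset.mem_powerset, Finset.subset_iff, Finset.mem_image, Finset.mem_range]
      rintro x ⟨i, _, rfl⟩
      exact i.isLt
    · intro S _ S' _ h
      exact Finset.image_injective Fin.val_injective h
    · intro T hT
      refine ⟨T.attachFin (fun x hx => Finset.mem_range.1 (Finset.mem_powerset.1 hT hx)),
        Finset.mem_univ _, ?_⟩
      ext x
      simp [Finset.mem_image, Finset.mem_attachFin]
    · intro S _
      rw [Finset.card_image_of_injective _ Fin.val_injective]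
  rw [step2, sumF]
  have hgb : gb (q^2) m n = qbinom q m n * q ^ (n*(m-n)) := by
    have h := gb_qfact q hq hk m n hn
    rw [qbinom]
    field_simp
    linear_combination h
  rw [hgb]
  have hppow : ((q^2) ^ (n*(n+1)/2) : ℂ) = q ^ (n*(n+1)) := by
    rw [← pow_mul]
    congr 1
    obtain ⟨c, hc⟩ := Nat.even_mul_succ_self n
    rw [hc]; omega
  rw [hppow]
  rw [← zpow_natCast q (n*(m-n)), ← zpow_natCast q (n*(n+1))]
  have hz : q ^ ((n:ℤ)*((n:ℤ)-1) - 2*(n:ℤ)*(m:ℤ)) * (q ^ ((n*(m-n) : ℕ) : ℤ) * q ^ ((n*(n+1) : ℕ) : ℤ))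
      = q ^ (-((n:ℤ) * ((m:ℤ) - (n:ℤ)))) := by
    rw [← zpow_add₀ hq, ← zpow_add₀ hq]
    congr 1
    have : ((m - n : ℕ) : ℤ) = (m:ℤ) - (n:ℤ) := by
      rw [Nat.cast_sub hn]
    push_cast [this]
    ring
  linear_combination (qbinom q m n) * hz

lemma oneSet_bij {m : ℕ} : Function.Bijective (oneSet (m := m)) := by
  constructor
  · intro c c' h
    funext i
    have hmem := Finset.ext_iff.1 h i
    simp only [oneSet, Finset.mem_filter, Finset.mem_univ, true_and] at hmem
    exact (by decide : ∀ a b : Fin 2, ((a = 1) ↔ (b = 1)) → a = b) _ _ hmem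
  · intro S
    refine ⟨fun i => if i ∈ S then 1 else 0, ?_⟩
    ext i
    simp only [oneSet, Finset.mem_filter, Finset.mem_univ, true_and]
    by_cases h : i ∈ S <;> simp [h]

lemma sum_config {m : ℕ} (g : Finset (Fin m) → ℂ) :
    ∑ c : Fin m → Fin 2, g (oneSet c) = ∑ S : Finset (Fin m), g S :=
  Fintype.sum_bijective oneSet oneSet_bij _ g (fun _ => rfl)

/-- In the massive regime (`q = e^η` with `η` real nonzero), the bra `⟨m,n||`
is the Hermitian conjugate of the ket `||m,n⟩` up to its positive norm. -/
theorem statement10 (η : ℝ) (hη : η ≠ 0) (m n : ℕ) (hn : n ≤ m) :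
    (∀ w : (Fin m → Fin 2) → ℂ,
      ∑ c : Fin m → Fin 2, braCoef (Complex.exp η) m n c * w c =
        (∑ c : Fin m → Fin 2, (starRingEnd ℂ) (ketCoef (Complex.exp η) m n c) * w c) /
        (∑ c : Fin m → Fin 2, (starRingEnd ℂ) (ketCoef (Complex.exp η) m n c) *
          ketCoef (Complex.exp η) m n c)) ∧
    (∀ w : (Fin m → Fin 2) → ℂ,
      ∑ c : Fin m → Fin 2, (starRingEnd ℂ) (ketCoef (Complex.exp η) m n c) * w c =
        qbinom (Complex.exp η) m n *
          (Complex.exp (η : ℂ)) ^ (-((n : ℤ) * ((m : ℤ) - (n : ℤ)))) *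
          ∑ c : Fin m → Fin 2, braCoef (Complex.exp η) m n c * w c) := by
  set q : ℂ := Complex.exp (η : ℂ) with hqdef
  have hq : q ≠ 0 := Complex.exp_ne_zero _
  have hqr : q = ((Real.exp η : ℝ) : ℂ) := by
    rw [hqdef, Complex.ofReal_exp]
  have hk : ∀ k : ℕ, 0 < k → q ^ k ≠ 1 := by
    intro k hk0 h
    rw [hqr] at h
    norm_cast at h
    rw [← Real.exp_nat_mul] at h
    have hz := (Real.exp_eq_one_iff _).1 h
    have : (k:ℝ) ≠ 0 := Nat.cast_ne_zero.2 (by omega)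
    exact hη (by
      rcases mul_eq_zero.1 hz with h' | h'
      · exact absurd h' this
      · exact h')
  have hcq : (starRingEnd ℂ) q = q := by
    rw [hqr]
    exact Complex.conj_ofReal _
  have hket : ∀ c, (starRingEnd ℂ) (ketCoef q m n c) = ketCoef q m n c := by
    intro c
    rw [ketCoef]
    split
    · rw [map_zpow₀, hcq]
    · rw [map_zero]
  have hb : qbinom q m n ≠ 0 := by
    rw [qbinom]
    exact div_ne_zero (qfact_ne_zero q hq hk _)
      (mul_ne_zero (qfact_ne_zero q hq hk _) (qfact_ne_zero q hq hk _))
  have hqe : (q : ℂ) ^ ((n : ℤ) * ((m : ℤ) - (n : ℤ))) ≠ 0 := zpow_ne_zero _ hq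
  have hnorm : ∑ c : Fin m → Fin 2,
      (starRingEnd ℂ) (ketCoef q m n c) * ketCoef q m n c
        = qbinom q m n * q ^ (-((n:ℤ) * ((m:ℤ) - (n:ℤ)))) := by
    have h1 : ∀ c : Fin m → Fin 2,
        (starRingEnd ℂ) (ketCoef q m n c) * ketCoef q m n c
          = (if (oneSet c).card = n then q ^ (2 * expKet m n (oneSet c)) else 0) := by
      intro c
      rw [hket, ketCoef]
      split
      · rw [← zpow_add₀ hq, two_mul]
      · rw [mul_zero]
    rw [Finset.sum_congr rfl fun c _ => h1 c,
      sum_config (fun S => if S.card = n then q ^ (2 * expKet m n S) else 0)]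
    exact norm_eq q hq hk m n hn
  have hL : ∀ w : (Fin m → Fin 2) → ℂ,
      ∑ c : Fin m → Fin 2, braCoef q m n c * w c
        = (qbinom q m n)⁻¹ * q ^ ((n:ℤ) * ((m:ℤ) - (n:ℤ))) *
            ∑ c : Fin m → Fin 2, ketCoef q m n c * w c := by
    intro w
    rw [Finset.mul_sum]
    exact Finset.sum_congr rfl fun c _ => by rw [braCoef]; ring
  have hR : ∀ w : (Fin m → Fin 2) → ℂ,
      ∑ c : Fin m → Fin 2, (starRingEnd ℂ) (ketCoef q m n c) * w c
        = ∑ c : Fin m → Fin 2, ketCoef q m n c * w c :=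
    fun w => Finset.sum_congr rfl fun c _ => by rw [hket]
  constructor
  · intro w
    rw [hnorm, hL, hR]
    rw [eq_div_iff (mul_ne_zero hb (zpow_ne_zero _ hq))]
    rw [_root_.zpow_neg]
    field_simp
  · intro w
    rw [hL, hR]
    rw [_root_.zpow_neg]
    field_simp
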